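/- Every A-lattice Λ of rank r in L is ultimately quasi-periodic with quasi-period 1 (the degree of the infinite place of 𝔽_q(T)): there exists N₀ ∈ ℚ such that for every rational x > N₀, #{λ ∈ Λ : log λ = x + 1} = q^r · #{λ ∈ Λ : log λ = x}. -/

import Mathlib

open scoped Classical

noncomputable section

variable {Fq : Type*} [Field Fq] [Fintype Fq]
variable {L : Type*} [NormedField L] [CompleteSpace L]
variable [Algebra (Polynomial Fq) L]

/-- `log_q |z|`. -/
def logq (q : ℕ) (z : L) : ℝ := Real.logb q ‖z‖

/-- An `A = 𝔽_q[T]`-lattice of rank `r` in `L`: a finitely generated `A`-submodule which is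
free of rank `r` (equivalently: its `𝔽_q(T)`-span has dimension `r`), and which is
discrete in `L` (finite intersection with every bounded ball). -/
def IsLatticeOfRank (r : ℕ) (Λ : Submodule (Polynomial Fq) L) : Prop :=
  (∃ b : Fin r → L, LinearIndependent (Polynomial Fq) b ∧
      Submodule.span (Polynomial Fq) (Set.range b) = Λ) ∧
  ∀ B : ℝ, {x : L | x ∈ Λ ∧ ‖x‖ ≤ B}.Finite

/-- Membership in `K·Λ`, the `K = 𝔽_q(T)`-span of `Λ` in `L`. -/
def InKSpan (Λ : Submodule (Polynomial Fq) L) (u : L) : Prop :=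
  ∃ n : Polynomial Fq, n ≠ 0 ∧ n • u ∈ Λ

/-- The exponential function of the lattice `Λ`: `e^Λ(z) = z·∏_{0≠λ∈Λ} (1 - z/λ)`. -/
def latExp (Λ : Submodule (Polynomial Fq) L) (z : L) : L :=
  z * ∏' l : {x : L // x ∈ Λ ∧ x ≠ 0}, (1 - z / (l : L))

/-- Every lattice of rank `r` is ultimately quasi-periodic with
quasi-period `1`: for all sufficiently large rational `x`,
`#{λ ∈ Λ : log λ = x + 1} = q^r · #{λ ∈ Λ : log λ = x}`. -/
theorem statement9
    (q : ℕ) (hq : Fintype.card Fq = q)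
    (hna : ∀ x y : L, ‖x + y‖ ≤ max ‖x‖ ‖y‖)
    (hA : ∀ a : Polynomial Fq, a ≠ 0 →
      ‖algebraMap (Polynomial Fq) L a‖ = (q : ℝ) ^ a.natDegree)
    (hval : ∀ x : L, x ≠ 0 → ∃ s : ℚ, ‖x‖ = (q : ℝ) ^ (s : ℝ))
    (r : ℕ)
    (Λ : Submodule (Polynomial Fq) L) (hΛ : IsLatticeOfRank r Λ) :
    ∃ N₀ : ℚ, ∀ x : ℚ, N₀ < x →
      Nat.card {l : L | l ∈ Λ ∧ l ≠ 0 ∧ logq q l = ((x : ℝ) + 1)} =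
        q ^ r * Nat.card {l : L | l ∈ Λ ∧ l ≠ 0 ∧ logq q l = (x : ℝ)} := by
  obtain ⟨⟨b, hb_li, hb_span⟩, -⟩ := hΛ
  have h1q : 1 < q := hq ▸ Fintype.one_lt_card
  have hqR : (1 : ℝ) < q := by exact_mod_cast h1q
  have hq0 : (0 : ℝ) < q := lt_trans one_pos hqR
  have hqne1 : (q : ℝ) ≠ 1 := ne_of_gt hqR
  -- ultrametric dominance
  have hdom : ∀ u a : L, ‖a‖ < ‖u‖ → ‖u + a‖ = ‖u‖ := by
    intro u a h
    refine le_antisymm (le_trans (hna u a) (by rw [max_eq_left h.le])) ?_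
    have h2 : ‖u‖ ≤ max ‖u + a‖ ‖a‖ := by
      have := hna (u + a) (-a)
      simpa using this
    rcases le_max_iff.mp h2 with h3 | h3
    · exact h3
    · exact absurd h3 (not_le.mpr h)
  -- norm of X • z
  have hX : ∀ z : L, ‖(Polynomial.X : Polynomial Fq) • z‖ = q * ‖z‖ := by
    intro z
    rw [Algebra.smul_def, norm_mul, hA _ Polynomial.X_ne_zero, Polynomial.natDegree_X,
      pow_one]
  -- basis elements are in Λ
  have hbΛ : ∀ i, b i ∈ Λ := fun i =>
    hb_span ▸ Submodule.subset_span ⟨i, rfl⟩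
  -- bound on basis norms
  set M : ℝ := ∑ i, ‖b i‖ with hM
  have hM0 : 0 ≤ M := Finset.sum_nonneg fun i _ => norm_nonneg _
  have hbM : ∀ i, ‖b i‖ ≤ M :=
    fun i => Finset.single_le_sum (fun j _ => norm_nonneg (b j)) (Finset.mem_univ i)
  obtain ⟨n, hn⟩ := pow_unbounded_of_one_lt M hqR
  refine ⟨(n : ℚ), fun x hx => ?_⟩
  have hnx : (n : ℝ) < (x : ℝ) := by exact_mod_cast hx
  have hMx : M < (q : ℝ) ^ (x : ℝ) := by
    refine lt_trans hn ?_
    rw [← Real.rpow_natCast (q : ℝ) n]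
    exact (Real.rpow_lt_rpow_left_iff hqR).mpr hnx
  have hxx1 : (q : ℝ) ^ (x : ℝ) < (q : ℝ) ^ ((x : ℝ) + 1) :=
    (Real.rpow_lt_rpow_left_iff hqR).mpr (by linarith)
  -- log ↔ norm
  have hlog₁ : ∀ (z : L) (y : ℝ), z ≠ 0 → logq q z = y → ‖z‖ = (q : ℝ) ^ y := by
    intro z y hz h
    rw [← h, logq, Real.rpow_logb hq0 hqne1 (norm_pos_iff.mpr hz)]
  have hlog₂ : ∀ (z : L) (y : ℝ), ‖z‖ = (q : ℝ) ^ y → logq q z = y := by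
    intro z y h
    rw [logq, h, Real.logb_rpow hq0 hqne1]
  -- the constant-coefficient combinations
  set e : (Fin r → Fq) → L := fun c => ∑ i, (Polynomial.C (c i)) • b i with he
  have heΛ : ∀ c, e c ∈ Λ := fun c =>
    Submodule.sum_mem _ fun i _ => Submodule.smul_mem _ _ (hbΛ i)
  -- ultrametric sum bound
  have hsum : ∀ (s : Finset (Fin r)) (f : Fin r → L), (∀ i, ‖f i‖ ≤ M) →
      ‖∑ i ∈ s, f i‖ ≤ M := by
    intro s
    induction s using Finset.induction_on with
    | empty => intro f hf; simpa using hM0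
    | insert _ _ h ih =>
        intro f hf
        rw [Finset.sum_insert h]
        exact le_trans (hna _ _) (max_le (hf _) (ih f hf))
  have heM : ∀ c, ‖e c‖ ≤ M := by
    intro c
    refine hsum Finset.univ _ fun i => ?_
    rcases eq_or_ne (c i) 0 with h | h
    · simp [h, hM0]
    · rw [Algebra.smul_def, norm_mul, hA _ (Polynomial.C_ne_zero.mpr h),
        Polynomial.natDegree_C, pow_zero, one_mul]
      exact hbM i
  -- the bijection
  set S0 : Set L := {l : L | l ∈ Λ ∧ l ≠ 0 ∧ logq q l = (x : ℝ)} with hS0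
  set S1 : Set L := {l : L | l ∈ Λ ∧ l ≠ 0 ∧ logq q l = ((x : ℝ) + 1)} with hS1
  have hΦprop : ∀ (c : Fin r → Fq) (l : S0),
      ((Polynomial.X : Polynomial Fq) • (l : L) + e c) ∈ S1 := by
    rintro c ⟨l, hlΛ, hl0, hllog⟩
    have hnl : ‖l‖ = (q : ℝ) ^ (x : ℝ) := hlog₁ l _ hl0 hllog
    have hXl : ‖(Polynomial.X : Polynomial Fq) • l‖ = (q : ℝ) ^ ((x : ℝ) + 1) := by
      rw [hX, hnl, Real.rpow_add hq0, Real.rpow_one]; ring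
    have hec : ‖e c‖ < ‖(Polynomial.X : Polynomial Fq) • l‖ := by
      rw [hXl]; exact lt_trans (lt_of_le_of_lt (heM c) hMx) hxx1
    have hnorm : ‖(Polynomial.X : Polynomial Fq) • l + e c‖ = (q : ℝ) ^ ((x : ℝ) + 1) := by
      rw [hdom _ _ hec, hXl]
    refine ⟨Submodule.add_mem _ (Submodule.smul_mem _ _ hlΛ) (heΛ c), ?_, hlog₂ _ _ hnorm⟩
    intro h0
    rw [h0, norm_zero] at hnorm
    exact absurd hnorm.symm (ne_of_gt (Real.rpow_pos_of_pos hq0 _))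
  set Φ : (Fin r → Fq) × S0 → S1 := fun p =>
    ⟨(Polynomial.X : Polynomial Fq) • (p.2 : L) + e p.1, hΦprop p.1 p.2⟩ with hΦ
  have hΦbij : Function.Bijective Φ := by
    constructor
    · rintro ⟨c, l, hl⟩ ⟨c', l', hl'⟩ heq
      have heq' : (Polynomial.X : Polynomial Fq) • l + e c
          = (Polynomial.X : Polynomial Fq) • l' + e c' := congrArg Subtype.val heq
      obtain ⟨a, ha⟩ := (Submodule.mem_span_range_iff_exists_fun _).mp (hb_span ▸ hl.1 : l ∈ _)
      obtain ⟨a', ha'⟩ := (Submodule.mem_span_range_iff_exists_fun _).mp (hb_span ▸ hl'.1 : l' ∈ _)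
      have expand : ∀ (a₀ : Fin r → Polynomial Fq) (c₀ : Fin r → Fq),
          (Polynomial.X : Polynomial Fq) • (∑ i, a₀ i • b i) + e c₀
            = ∑ i, (Polynomial.X * a₀ i + Polynomial.C (c₀ i)) • b i := by
        intro a₀ c₀
        rw [he, Finset.smul_sum, ← Finset.sum_add_distrib]
        refine Finset.sum_congr rfl fun i _ => ?_
        rw [smul_smul, add_smul]
      rw [← ha, ← ha', expand, expand] at heq'
      have hcoef : ∀ i, Polynomial.X * a i + Polynomial.C (c i)
          = Polynomial.X * a' i + Polynomial.C (c' i) := by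
        intro i
        have hz : ∑ i, ((Polynomial.X * a i + Polynomial.C (c i))
            - (Polynomial.X * a' i + Polynomial.C (c' i))) • b i = 0 := by
          simp only [sub_smul, Finset.sum_sub_distrib, heq', sub_self]
        have := Fintype.linearIndependent_iff.mp hb_li _ hz i
        exact sub_eq_zero.mp this
      have hc : c = c' := by
        funext i
        have h0 := congrArg (fun p => Polynomial.coeff p 0) (hcoef i)
        simpa [Polynomial.mul_coeff_zero] using h0
      have haeq : ∀ i, a i = a' i := by
        intro i
        have h2 := hcoef i
        rw [hc] at h2
        exact mul_left_cancel₀ Polynomial.X_ne_zero (add_right_cancel h2)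
      have hll' : l = l' := by rw [← ha, ← ha']; exact Finset.sum_congr rfl fun i _ => by rw [haeq i]
      exact Prod.ext hc (Subtype.ext hll')
    · rintro ⟨μ, hμΛ, hμ0, hμlog⟩
      obtain ⟨a, ha⟩ := (Submodule.mem_span_range_iff_exists_fun _).mp (hb_span ▸ hμΛ : μ ∈ _)
      set c : Fin r → Fq := fun i => (a i).coeff 0 with hc
      set l : L := ∑ i, (a i).divX • b i with hl
      have hlΛ : l ∈ Λ := Submodule.sum_mem _ fun i _ => Submodule.smul_mem _ _ (hbΛ i)
      have hμeq : (Polynomial.X : Polynomial Fq) • l + e c = μ := by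
        rw [hl, he, Finset.smul_sum, ← Finset.sum_add_distrib, ← ha]
        refine Finset.sum_congr rfl fun i _ => ?_
        rw [smul_smul, ← add_smul]
        congr 1
        rw [mul_comm]
        exact Polynomial.divX_mul_X_add (a i)
      have hnμ : ‖μ‖ = (q : ℝ) ^ ((x : ℝ) + 1) := hlog₁ μ _ hμ0 hμlog
      have hec : ‖-(e c)‖ < ‖μ‖ := by
        rw [norm_neg, hnμ]
        exact lt_trans (lt_of_le_of_lt (heM c) hMx) hxx1
      have hXl : ‖(Polynomial.X : Polynomial Fq) • l‖ = (q : ℝ) ^ ((x : ℝ) + 1) := by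
        have : (Polynomial.X : Polynomial Fq) • l = μ + -(e c) := by
          rw [← hμeq]; ring_nf
        rw [this, hdom _ _ hec, hnμ]
      have hnl : ‖l‖ = (q : ℝ) ^ (x : ℝ) := by
        have h1 : (q : ℝ) * ‖l‖ = (q : ℝ) * (q : ℝ) ^ (x : ℝ) := by
          rw [← hX]
          rw [hXl, Real.rpow_add hq0, Real.rpow_one]; ring
        exact mul_left_cancel₀ (ne_of_gt hq0) h1
      have hl0 : l ≠ 0 := by
        intro h0
        rw [h0, norm_zero] at hnl
        exact absurd hnl.symm (ne_of_gt (Real.rpow_pos_of_pos hq0 _))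
      refine ⟨⟨c, ⟨l, hlΛ, hl0, hlog₂ _ _ hnl⟩⟩, ?_⟩
      exact Subtype.ext hμeq
  have hcard : Nat.card ((Fin r → Fq) × S0) = Nat.card S1 :=
    Nat.card_eq_of_bijective Φ hΦbij
  rw [← hcard, Nat.card_prod, Nat.card_eq_fintype_card, Fintype.card_fun,
    Fintype.card_fin, hq]
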